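/- Let μ be a probability measure on a measurable space α, and let λ, η : α → ℝ be measurable. Let 0 ≤ Λ₁ ≤ 1 ≤ Λ₂ with Λ₁ < Λ₂, let Δ₁, Δ₂ ≥ 0 and m ∈ ℝ, and set τ := (Λ₂ − 1)/(Λ₂ − Λ₁). Assume Λ₁ ≤ λ(u) ≤ Λ₂ for μ-almost every u, ∫ λ dμ = 1, m − Δ₁ ≤ η(u) ≤ m + Δ₂ for μ-almost every u, and ∫ η dμ = m. Then ∫ η·λ dμ ≤ m + (Λ₂ − Λ₁)·min( τ·Δ₁, (1 − τ)·Δ₂ ). -/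

import Mathlib

open MeasureTheory

private lemma integrable_of_bdd {α : Type*} [MeasurableSpace α] {μ : Measure α}
    [IsFiniteMeasure μ] {f : α → ℝ} (hf : Measurable f) {C : ℝ}
    (h : ∀ᵐ u ∂μ, ‖f u‖ ≤ C) : Integrable f μ :=
  ⟨hf.aestronglyMeasurable, HasFiniteIntegral.of_bounded h⟩

theorem eMSM_relaxed_upper_bound
    {α : Type*} [MeasurableSpace α] (μ : Measure α) [IsProbabilityMeasure μ]
    (lam η : α → ℝ) (hlam : Measurable lam) (hη : Measurable η)
    (Λ₁ Λ₂ Δ₁ Δ₂ m : ℝ)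
    (hΛ₁0 : 0 ≤ Λ₁) (hΛ₁1 : Λ₁ ≤ 1) (hΛ₂1 : 1 ≤ Λ₂) (hΛlt : Λ₁ < Λ₂)
    (hΔ₁ : 0 ≤ Δ₁) (hΔ₂ : 0 ≤ Δ₂)
    (hlam_bd : ∀ᵐ u ∂μ, Λ₁ ≤ lam u ∧ lam u ≤ Λ₂)
    (hlam_int : (∫ u, lam u ∂μ) = 1)
    (hη_bd : ∀ᵐ u ∂μ, m - Δ₁ ≤ η u ∧ η u ≤ m + Δ₂)
    (hη_int : (∫ u, η u ∂μ) = m) :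
    (∫ u, η u * lam u ∂μ) ≤
      m + (Λ₂ - Λ₁) *
        min (((Λ₂ - 1) / (Λ₂ - Λ₁)) * Δ₁) ((1 - (Λ₂ - 1) / (Λ₂ - Λ₁)) * Δ₂) := by
  have hΛpos : (0:ℝ) < Λ₂ - Λ₁ := by linarith
  have hΛne : Λ₂ - Λ₁ ≠ 0 := ne_of_gt hΛpos
  -- integrability
  have hlamI : Integrable lam μ := by
    refine integrable_of_bdd hlam (C := Λ₂) ?_
    filter_upwards [hlam_bd] with u hu
    rw [Real.norm_eq_abs, abs_le]; exact ⟨by linarith [hu.1], hu.2⟩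
  have hηI : Integrable η μ := by
    refine integrable_of_bdd hη (C := |m| + Δ₁ + Δ₂) ?_
    filter_upwards [hη_bd] with u hu
    have h1 := neg_abs_le m; have h2 := le_abs_self m
    rw [Real.norm_eq_abs, abs_le]
    exact ⟨by linarith [hu.1], by linarith [hu.2]⟩
  have hprodI : Integrable (fun u => η u * lam u) μ := by
    refine integrable_of_bdd (hη.mul hlam) (C := (|m| + Δ₁ + Δ₂) * Λ₂) ?_
    filter_upwards [hlam_bd, hη_bd] with u h1 h2
    have h3 := neg_abs_le m; have h4 := le_abs_self m
    have hA : |η u| ≤ |m| + Δ₁ + Δ₂ := abs_le.2 ⟨by linarith [h2.1], by linarith [h2.2]⟩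
    have hB : |lam u| ≤ Λ₂ := abs_le.2 ⟨by linarith [h1.1], h1.2⟩
    calc ‖η u * lam u‖ = |η u| * |lam u| := abs_mul _ _
      _ ≤ (|m| + Δ₁ + Δ₂) * Λ₂ := mul_le_mul hA hB (abs_nonneg _) (by positivity)
  set I := ∫ u, η u * lam u ∂μ with hI
  -- bound (a): I - m ≤ (Λ₂ - 1) * Δ₁
  have ha : I - m ≤ (Λ₂ - 1) * Δ₁ := by
    have lhsI : Integrable (fun u => (η u - m + Δ₁) * (lam u - 1)) μ := by
      have : (fun u => (η u - m + Δ₁) * (lam u - 1))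
          = fun u => (η u * lam u - η u) + ((Δ₁ - m) * lam u - (Δ₁ - m)) := by
        funext u; ring
      rw [this]
      exact (hprodI.sub hηI).add ((hlamI.const_mul _).sub (integrable_const _))
    have rhsI : Integrable (fun u => (η u - m + Δ₁) * (Λ₂ - 1)) μ :=
      (((hηI.sub (integrable_const m)).add (integrable_const Δ₁)).mul_const _)
    have hmono : ∫ u, (η u - m + Δ₁) * (lam u - 1) ∂μ
        ≤ ∫ u, (η u - m + Δ₁) * (Λ₂ - 1) ∂μ := by
      refine integral_mono_ae lhsI rhsI ?_
      filter_upwards [hlam_bd, hη_bd] with u h1 h2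
      exact mul_le_mul_of_nonneg_left (by linarith [h1.2]) (by linarith [h2.1])
    have e1 : ∫ u, (η u - m + Δ₁) * (lam u - 1) ∂μ = I - m := by
      have he : (fun u => (η u - m + Δ₁) * (lam u - 1))
          = fun u => (η u * lam u - η u) + ((Δ₁ - m) * lam u - (Δ₁ - m)) := by
        funext u; ring
      have i1 : Integrable (fun u => η u * lam u - η u) μ := hprodI.sub hηI
      have i2 : Integrable (fun u => (Δ₁ - m) * lam u - (Δ₁ - m)) μ :=
        (hlamI.const_mul _).sub (integrable_const _)
      rw [he, integral_add i1 i2, integral_sub hprodI hηI,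
        integral_sub (hlamI.const_mul _) (integrable_const _),
        integral_const_mul, hlam_int, hη_int, integral_const]
      simp; rfl
    have e2 : ∫ u, (η u - m + Δ₁) * (Λ₂ - 1) ∂μ = (Λ₂ - 1) * Δ₁ := by
      have i3 : Integrable (fun u => η u - m) μ := hηI.sub (integrable_const m)
      rw [integral_mul_const, integral_add i3 (integrable_const Δ₁),
        integral_sub hηI (integrable_const m), hη_int, integral_const, integral_const]
      simp [mul_comm]
    rw [e1, e2] at hmono; exact hmono
  -- bound (b): I - m ≤ (1 - Λ₁) * Δ₂
  have hb : I - m ≤ (1 - Λ₁) * Δ₂ := by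
    have lhsI : Integrable (fun u => (η u - m) * (lam u - Λ₁)) μ := by
      have : (fun u => (η u - m) * (lam u - Λ₁))
          = fun u => (η u * lam u - Λ₁ * η u) + (-(m * lam u) + m * Λ₁) := by
        funext u; ring
      rw [this]
      exact (hprodI.sub (hηI.const_mul _)).add (((hlamI.const_mul m).neg).add (integrable_const _))
    have rhsI : Integrable (fun u => Δ₂ * (lam u - Λ₁)) μ :=
      ((hlamI.sub (integrable_const Λ₁)).const_mul _)
    have hmono : ∫ u, (η u - m) * (lam u - Λ₁) ∂μ ≤ ∫ u, Δ₂ * (lam u - Λ₁) ∂μ := by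
      refine integral_mono_ae lhsI rhsI ?_
      filter_upwards [hlam_bd, hη_bd] with u h1 h2
      exact mul_le_mul_of_nonneg_right (by linarith [h2.2]) (by linarith [h1.1])
    have e1 : ∫ u, (η u - m) * (lam u - Λ₁) ∂μ = I - m := by
      have he : (fun u => (η u - m) * (lam u - Λ₁))
          = fun u => (η u * lam u - Λ₁ * η u) + (-(m * lam u) + m * Λ₁) := by
        funext u; ring
      have i1 : Integrable (fun u => η u * lam u - Λ₁ * η u) μ := hprodI.sub (hηI.const_mul _)
      have i2 : Integrable (fun u => -(m * lam u) + m * Λ₁) μ :=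
        ((hlamI.const_mul m).neg).add (integrable_const _)
      have i3 : Integrable (fun u => -(m * lam u)) μ := (hlamI.const_mul m).neg
      rw [he, integral_add i1 i2, integral_sub hprodI (hηI.const_mul _),
        integral_add i3 (integrable_const _),
        integral_neg, integral_const_mul, integral_const_mul, hlam_int, hη_int,
        integral_const]
      simp; ring
    have e2 : ∫ u, Δ₂ * (lam u - Λ₁) ∂μ = (1 - Λ₁) * Δ₂ := by
      rw [integral_const_mul, integral_sub hlamI (integrable_const Λ₁), hlam_int,
        integral_const]
      simp; ring
    rw [e1, e2] at hmono; exact hmono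
  -- combine
  have hmin : (Λ₂ - Λ₁) * min (((Λ₂ - 1) / (Λ₂ - Λ₁)) * Δ₁) ((1 - (Λ₂ - 1) / (Λ₂ - Λ₁)) * Δ₂)
      = min ((Λ₂ - 1) * Δ₁) ((1 - Λ₁) * Δ₂) := by
    rw [mul_min_of_nonneg _ _ (le_of_lt hΛpos)]
    congr 1 <;> field_simp <;> ring
  rw [hmin]
  rcases le_total ((Λ₂ - 1) * Δ₁) ((1 - Λ₁) * Δ₂) with h | h
  · rw [min_eq_left h]; linarith
  · rw [min_eq_right h]; linarith
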